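/- Let σ : [0,∞) → ℝ be differentiable and convex with σ(0) = 0 and σ(r)/r → ∞ as r → ∞. Then there exist constants η > 0 and M₀ > 0 such that for every integer p ≥ M₀ and every integer k with 1 ≤ k ≤ p−1, σ(p) − σ(p−k) − σ(k) ≥ η σ(p−1)/(p−1). -/
import Mathlib


open Filter

/-- Karamata-type inequality: for convex `σ` on `[0,∞)` and `1 ≤ x ≤ p - x`,
`σ x + σ (p - x) ≤ σ 1 + σ (p - 1)`. -/
lemma sigma_key (σ : ℝ → ℝ) (hconv : ConvexOn ℝ (Set.Ici 0) σ)
    {x p : ℝ} (hx : 1 ≤ x) (hxp : x ≤ p - x) :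
    σ x + σ (p - x) ≤ σ 1 + σ (p - 1) := by
  rcases eq_or_lt_of_le hx with rfl | hx1
  · simp
  -- now 1 < x ≤ p - x, so p - 1 ≥ p - x ≥ x > 1
  have hpx1 : x ≤ p - 1 := by linarith
  have h1 : (1 : ℝ) ∈ Set.Ici (0:ℝ) := by norm_num
  have hxmem : x ∈ Set.Ici (0:ℝ) := by simp only [Set.mem_Ici]; linarith
  have hp1mem : p - 1 ∈ Set.Ici (0:ℝ) := by simp only [Set.mem_Ici]; linarith
  have hpxmem : p - x ∈ Set.Ici (0:ℝ) := by simp only [Set.mem_Ici]; linarith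
  have s1 : (σ x - σ 1) / (x - 1) ≤ (σ (p - 1) - σ 1) / (p - 1 - 1) :=
    hconv.secant_mono h1 hxmem hp1mem (by linarith) (by linarith) hpx1
  have s2 : (σ 1 - σ (p - 1)) / (1 - (p - 1)) ≤ (σ (p - x) - σ (p - 1)) / (p - x - (p - 1)) :=
    hconv.secant_mono hp1mem h1 hpxmem (by intro h; linarith) (by intro h; linarith)
      (by linarith)
  have e1 : (σ 1 - σ (p - 1)) / (1 - (p - 1)) = (σ (p - 1) - σ 1) / (p - 1 - 1) := by
    rw [← neg_div_neg_eq]; ring_nf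
  have e2 : (σ (p - x) - σ (p - 1)) / (p - x - (p - 1)) = (σ (p - 1) - σ (p - x)) / (x - 1) := by
    rw [← neg_div_neg_eq]; ring_nf
  rw [e1, e2] at s2
  have := s1.trans s2
  have hx1' : (0:ℝ) < x - 1 := by linarith
  have := (div_le_div_iff_of_pos_right hx1').mp this
  linarith

theorem sigma_lower_bound
    (σ : ℝ → ℝ)
    (hdiff : DifferentiableOn ℝ σ (Set.Ici 0))
    (hconv : ConvexOn ℝ (Set.Ici 0) σ)
    (h0 : σ 0 = 0)
    (hlim : Tendsto (fun r : ℝ => σ r / r) atTop atTop) :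
    ∃ η : ℝ, 0 < η ∧ ∃ M₀ : ℝ, 0 < M₀ ∧
      ∀ p : ℕ, M₀ ≤ (p : ℝ) → ∀ k : ℕ, 1 ≤ k → k ≤ p - 1 →
        η * σ ((p : ℝ) - 1) / ((p : ℝ) - 1)
          ≤ σ (p : ℝ) - σ ((p : ℝ) - k) - σ (k : ℝ) := by
  set C : ℝ := max (σ 1) 1 with hC
  have hC1 : (1:ℝ) ≤ C := le_max_right _ _
  have hCσ : σ 1 ≤ C := le_max_left _ _
  obtain ⟨M, hM⟩ := (hlim.eventually_ge_atTop (2 * C)).exists_forall_of_atTop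
  refine ⟨1/2, by norm_num, max (M + 1) 2, lt_of_lt_of_le (by norm_num) (le_max_right _ _), ?_⟩
  intro p hp k hk1 hkp
  have hp2 : (2:ℝ) ≤ (p:ℝ) := le_trans (le_max_right _ _) hp
  have hpM : M ≤ (p:ℝ) - 1 := by
    have := le_trans (le_max_left _ _) hp; linarith
  have hQ : 2 * C ≤ σ ((p:ℝ) - 1) / ((p:ℝ) - 1) := hM _ hpM
  set Q : ℝ := σ ((p:ℝ) - 1) / ((p:ℝ) - 1) with hQdef
  have hp1pos : (0:ℝ) < (p:ℝ) - 1 := by linarith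
  -- step: σ(p) - σ(p-1) ≥ Q
  have hstep : Q ≤ σ (p:ℝ) - σ ((p:ℝ) - 1) := by
    have := hconv.secant_mono (a := (p:ℝ) - 1) (x := 0) (y := (p:ℝ))
      (by simp only [Set.mem_Ici]; linarith) Set.self_mem_Ici (by simp only [Set.mem_Ici]; linarith)
      (by intro h; linarith) (by intro h; linarith) (by linarith)
    rw [h0] at this
    have e : (0 - σ ((p:ℝ) - 1)) / (0 - ((p:ℝ) - 1)) = Q := by
      rw [hQdef, ← neg_div_neg_eq]; ring_nf
    rw [e] at this
    have e2 : ((p:ℝ) - ((p:ℝ) - 1)) = 1 := by ring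
    rw [e2, div_one] at this
    linarith
  -- step: σ(p-k) + σ(k) ≤ σ 1 + σ(p-1)
  have hk1' : (1:ℝ) ≤ (k:ℝ) := by exact_mod_cast hk1
  have hkp' : (k:ℝ) ≤ (p:ℝ) - 1 := by
    have hp1 : 1 ≤ p := by
      have : (1:ℝ) ≤ (p:ℝ) := by linarith
      exact_mod_cast this
    have : (k:ℝ) ≤ ((p - 1 : ℕ) : ℝ) := by exact_mod_cast hkp
    rwa [Nat.cast_sub hp1, Nat.cast_one] at this
  have hmaj : σ ((p:ℝ) - k) + σ (k:ℝ) ≤ σ 1 + σ ((p:ℝ) - 1) := by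
    rcases le_total (k:ℝ) ((p:ℝ) - k) with h | h
    · have := sigma_key σ hconv hk1' h
      linarith
    · have h1 : (1:ℝ) ≤ (p:ℝ) - k := by linarith
      have h2 : (p:ℝ) - k ≤ (p:ℝ) - ((p:ℝ) - k) := by linarith
      have := sigma_key σ hconv h1 h2
      have e : (p:ℝ) - ((p:ℝ) - k) = (k:ℝ) := by ring
      rw [e] at this
      linarith
  -- combine
  have hσ1 : σ 1 ≤ Q / 2 := by linarith
  have : Q / 2 ≤ σ (p:ℝ) - σ ((p:ℝ) - k) - σ (k:ℝ) := by linarith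
  calc 1/2 * σ ((p:ℝ) - 1) / ((p:ℝ) - 1) = Q / 2 := by rw [hQdef]; ring
    _ ≤ _ := this
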